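/- Every nontrivial linear [n,k,d]_q code C that is completely regular with covering radius ρ = 1 is completely transitive, i.e., the action of Aut(C) on the cosets of C has exactly 2 orbits. -/

import Mathlib

open Finset

variable {F : Type*} [Field F] [Fintype F] [DecidableEq F]

/-- The Hamming distance from a vector to a code. -/
noncomputable def distToCode {ι : Type*} [Fintype ι] (C : Set (ι → F)) (x : ι → F) : ℕ :=
  sInf {d : ℕ | ∃ c ∈ C, hammingDist x c = d}

/-- The covering radius of a code: the maximal distance of a vector to the code. -/
noncomputable def coveringRadius {ι : Type*} [Fintype ι] (C : Set (ι → F)) : ℕ :=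
  sSup {d : ℕ | ∃ x : ι → F, distToCode C x = d}

/-- `C` has intersection numbers `b l` (number of neighbours one step further from the code)
and `c l` (number of neighbours one step closer to the code), for every `x` at distance `l`. -/
def HasIntersectionNumbers {ι : Type*} [Fintype ι] (C : Set (ι → F)) (b c : ℕ → ℕ) : Prop :=
  ∀ l : ℕ, ∀ x : ι → F, distToCode C x = l →
    Nat.card {y : ι → F | hammingDist x y = 1 ∧ distToCode C y = l + 1} = b l ∧
    Nat.card {y : ι → F | hammingDist x y = 1 ∧ distToCode C y + 1 = l} = c l

/-- A code is completely regular if it admits intersection numbers. -/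
def IsCompletelyRegular {ι : Type*} [Fintype ι] (C : Set (ι → F)) : Prop :=
  ∃ b c : ℕ → ℕ, HasIntersectionNumbers C b c

/-- The minimum distance of a code. -/
noncomputable def minDist {ι : Type*} [Fintype ι] (C : Set (ι → F)) : ℕ :=
  sInf {d : ℕ | ∃ x ∈ C, ∃ y ∈ C, x ≠ y ∧ hammingDist x y = d}

/-- A code is equidistant if any two distinct codewords are at the same Hamming distance. -/
def IsEquidistant {ι : Type*} [Fintype ι] (C : Set (ι → F)) : Prop :=
  ∃ d : ℕ, ∀ x ∈ C, ∀ y ∈ C, x ≠ y → hammingDist x y = d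

/-- The dual of a code, with respect to the standard bilinear form. -/
def dualSet {ι : Type*} [Fintype ι] (C : Set (ι → F)) : Set (ι → F) :=
  {y | ∀ x ∈ C, ∑ i, x i * y i = 0}

/-- A code of length `n` is antipodal if it contains a word of Hamming weight `n`. -/
def IsAntipodal {ι : Type*} [Fintype ι] (C : Set (ι → F)) : Prop :=
  ∃ v ∈ C, hammingNorm v = Fintype.card ι

/-- A monomial transformation: a coordinate permutation composed with multiplication of
each coordinate by a nonzero scalar. -/
def IsMonomialMap {ι : Type*} (φ : (ι → F) → (ι → F)) : Prop :=
  ∃ (π : Equiv.Perm ι) (s : ι → Fˣ), ∀ x i, φ x i = (s i : F) * x (π i)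

/-- Two codes are monomially equivalent if one is the image of the other under a bijection of
coordinates together with multiplication of each coordinate by a nonzero scalar. -/
def MonomiallyEquivalent {ι κ : Type*} (C : Set (ι → F)) (D : Set (κ → F)) : Prop :=
  ∃ (e : ι ≃ κ) (s : ι → Fˣ),
    (fun (x : ι → F) (j : κ) => (s (e.symm j) : F) * x (e.symm j)) '' C = D

/-- The orbit, under the action of `Aut C` on the cosets of `C`, of the coset of `v`
(realised as the union of all cosets in the orbit). -/
def cosetOrbit {ι : Type*} (C : Submodule F (ι → F)) (v : ι → F) : Set (ι → F) :=
  {w | ∃ φ : (ι → F) → (ι → F), IsMonomialMap φ ∧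
    φ '' (C : Set (ι → F)) = (C : Set (ι → F)) ∧ φ v - w ∈ C}

/-- The number of orbits of the action of `Aut C` on the cosets of `C`. -/
noncomputable def numCosetOrbits {ι : Type*} (C : Submodule F (ι → F)) : ℕ :=
  Nat.card (Set.range (cosetOrbit C))

/-- `H` is a `q`-ary Hamming code with parameter `m ≥ 2`: a perfect
`[(q^m-1)/(q-1), (q^m-1)/(q-1) - m, 3]_q` code with covering radius 1. -/
def IsHammingCode (m : ℕ) {nm : ℕ} (H : Submodule F (Fin nm → F)) : Prop :=
  2 ≤ m ∧ nm = (Fintype.card F ^ m - 1) / (Fintype.card F - 1) ∧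
  Module.finrank F H = nm - m ∧ minDist (H : Set (Fin nm → F)) = 3 ∧
  coveringRadius (H : Set (Fin nm → F)) = 1

/-- The extended code: append an overall parity-check coordinate. -/
def extendedCode {m : ℕ} (D : Set (Fin m → F)) : Set (Fin (m + 1) → F) :=
  {z | (fun i : Fin m => z i.castSucc) ∈ D ∧ ∑ i, z i = 0}

/-- Construction I(u): append `u` free coordinates to every codeword. -/
def appendCode (u : ℕ) {n : ℕ} (C : Set (Fin n → F)) : Set (Fin (n + u) → F) :=
  {z | ∃ c ∈ C, ∃ y : Fin u → F, z = Fin.append c y}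

/-- Construction II(ℓ): codewords are `ℓ`-tuples of blocks whose `λ`-weighted sum lies in `C`. -/
def repeatCode {n ℓ : ℕ} (lam : Fin ℓ → Fˣ) (C : Set (Fin n → F)) :
    Set (Fin ℓ × Fin n → F) :=
  {z | (fun j : Fin n => ∑ i : Fin ℓ, (lam i : F) * z (i, j)) ∈ C}

/-- The code `{(x₁|⋯|x_ℓ|y) : x₁+⋯+x_ℓ ∈ H, y free}` built from a code `H`. -/
def hammingRepeatCode {nm : ℕ} (ℓ u : ℕ) (H : Set (Fin nm → F)) :
    Set ((Fin ℓ × Fin nm) ⊕ Fin u → F) :=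
  {z | (fun j : Fin nm => ∑ i : Fin ℓ, z (Sum.inl (i, j))) ∈ H}


/-! ### Auxiliary lemmas for Statement 11 -/

section CR11Aux

variable {n : ℕ}

lemma CR11.distToCode_eq_zero_iff (C : Submodule F (Fin n → F)) (x : Fin n → F) :
    distToCode (C : Set (Fin n → F)) x = 0 ↔ x ∈ C := by
  unfold distToCode
  rw [Nat.sInf_eq_zero]
  constructor
  · rintro (⟨c, hc, hd⟩ | hemp)
    · rwa [hammingDist_eq_zero.mp hd]
    · exfalso
      have : hammingDist x 0 ∈ {d : ℕ | ∃ c ∈ (C : Set (Fin n → F)), hammingDist x c = d} :=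
        ⟨0, C.zero_mem, rfl⟩
      rw [hemp] at this; exact this
  · intro hx
    exact Or.inl ⟨x, hx, hammingDist_eq_zero.mpr rfl⟩

lemma CR11.distToCode_le_one (C : Submodule F (Fin n → F))
    (hρ : coveringRadius (C : Set (Fin n → F)) = 1) (x : Fin n → F) :
    distToCode (C : Set (Fin n → F)) x ≤ 1 := by
  have hb : BddAbove {d : ℕ | ∃ y : Fin n → F, distToCode (C : Set (Fin n → F)) y = d} := by
    refine ⟨Fintype.card (Fin n), ?_⟩
    rintro d ⟨y, rfl⟩
    calc distToCode (C : Set (Fin n → F)) y ≤ hammingDist y 0 :=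
          Nat.sInf_le ⟨0, C.zero_mem, rfl⟩
      _ ≤ Fintype.card (Fin n) := hammingDist_le_card_fintype
  have := le_csSup hb (Set.mem_setOf_eq ▸ ⟨x, rfl⟩ :
    distToCode (C : Set (Fin n → F)) x ∈
      {d : ℕ | ∃ y : Fin n → F, distToCode (C : Set (Fin n → F)) y = d})
  rwa [← coveringRadius, hρ] at this

lemma CR11.distToCode_eq_one (C : Submodule F (Fin n → F))
    (hρ : coveringRadius (C : Set (Fin n → F)) = 1) {x : Fin n → F} (hx : x ∉ C) :
    distToCode (C : Set (Fin n → F)) x = 1 := by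
  have h1 := CR11.distToCode_le_one C hρ x
  have h0 : distToCode (C : Set (Fin n → F)) x ≠ 0 := fun h =>
    hx ((CR11.distToCode_eq_zero_iff C x).mp h)
  omega

lemma CR11.hammingNorm_single {i : Fin n} {γ : F} (h : γ ≠ 0) :
    hammingNorm (Pi.single i γ : Fin n → F) = 1 := by
  unfold hammingNorm
  rw [Finset.card_eq_one]
  refine ⟨i, ?_⟩
  ext j
  simp only [Finset.mem_filter, Finset.mem_univ, true_and, Finset.mem_singleton]
  constructor
  · intro hj
    by_contra hne
    exact hj (Pi.single_eq_of_ne (M := fun _ => F) hne γ)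
  · rintro rfl
    rw [Pi.single_eq_same]; exact h

lemma CR11.eq_single_of_hammingNorm_eq_one {v : Fin n → F} (h : hammingNorm v = 1) :
    ∃ i : Fin n, ∃ γ : F, γ ≠ 0 ∧ v = Pi.single i γ := by
  unfold hammingNorm at h
  rw [Finset.card_eq_one] at h
  obtain ⟨i, hi⟩ := h
  have hmem : ∀ j : Fin n, v j ≠ 0 ↔ j = i := by
    intro j
    constructor
    · intro hj
      have : j ∈ Finset.filter (fun j => v j ≠ 0) Finset.univ := by simp [hj]
      rw [hi] at this; simpa using this
    · rintro rfl
      have hj2 : j ∈ Finset.filter (fun j => v j ≠ 0) Finset.univ := by rw [hi]; simp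
      simpa using hj2
  refine ⟨i, v i, (hmem i).mpr rfl, ?_⟩
  funext j
  by_cases hj : j = i
  · subst hj; rw [Pi.single_eq_same]
  · rw [Pi.single_eq_of_ne hj]
    by_contra hne
    exact hj ((hmem j).mp hne)

lemma CR11.single_eq_smul (i : Fin n) (γ : F) :
    (Pi.single i γ : Fin n → F) = γ • (Pi.single i (1 : F) : Fin n → F) := by
  funext j
  by_cases hj : j = i
  · subst hj; simp
  · simp [Pi.single_eq_of_ne hj]

lemma CR11.mkQ_single (C : Submodule F (Fin n → F)) (i : Fin n) (γ : F) :
    C.mkQ (Pi.single i γ) = γ • C.mkQ (Pi.single i (1 : F)) := by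
  rw [CR11.single_eq_smul, map_smul]

lemma CR11.card_pairs_eq_card_nbrs (C : Submodule F (Fin n → F)) (x : Fin n → F) :
    Nat.card {p : Fin n × Fˣ // (p.2 : F) • C.mkQ (Pi.single p.1 (1 : F)) = C.mkQ x} =
      Nat.card {y : Fin n → F // hammingDist x y = 1 ∧ y ∈ (C : Set (Fin n → F))} := by
  refine Nat.card_congr (Equiv.ofBijective
    (fun p => ⟨x - Pi.single p.1.1 ((p.1.2 : F)), ?_, ?_⟩) ⟨?_, ?_⟩)
  · rw [hammingDist_comm, hammingDist_eq_hammingNorm, neg_sub, sub_add_cancel]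
    exact CR11.hammingNorm_single (Units.ne_zero p.1.2)
  · have := p.2
    have h2 : C.mkQ (x - Pi.single p.1.1 ((p.1.2 : F))) = 0 := by
      rw [map_sub, CR11.mkQ_single, this, sub_self]
    rwa [Submodule.mkQ_apply, Submodule.Quotient.mk_eq_zero] at h2
  · rintro ⟨⟨i, γ⟩, hp⟩ ⟨⟨i', γ'⟩, hp'⟩ heq
    simp only [Subtype.mk.injEq] at heq
    have hsing : (Pi.single i ((γ : F)) : Fin n → F) = Pi.single i' ((γ' : F)) := by
      have := sub_right_injective heq
      exact this
    have hii : i = i' := by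
      by_contra hne
      have := congrFun hsing i
      rw [Pi.single_eq_same, Pi.single_eq_of_ne hne] at this
      exact Units.ne_zero γ this
    subst hii
    have hγ : (γ : F) = (γ' : F) := by
      have := congrFun hsing i
      rwa [Pi.single_eq_same, Pi.single_eq_same] at this
    have : γ = γ' := Units.ext hγ
    subst this
    rfl
  · rintro ⟨y, hy1, hy2⟩
    have hnorm : hammingNorm (x - y) = 1 := by
      rw [← neg_add_eq_sub, ← hammingDist_eq_hammingNorm, hammingDist_comm]; exact hy1
    obtain ⟨i, γ, hγ, hv⟩ := CR11.eq_single_of_hammingNorm_eq_one hnorm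
    refine ⟨⟨⟨i, Units.mk0 γ hγ⟩, ?_⟩, ?_⟩
    · have hyq : C.mkQ y = 0 := by
        rw [Submodule.mkQ_apply, Submodule.Quotient.mk_eq_zero]; exact hy2
      have : C.mkQ (x - y) = C.mkQ x := by rw [map_sub, hyq, sub_zero]
      rw [hv, CR11.mkQ_single] at this
      exact this
    · simp only [Subtype.mk.injEq]
      rw [Units.val_mk0, ← hv, sub_sub_cancel]

lemma CR11.card_pairs_eq_card_fiber (C : Submodule F (Fin n → F))
    {s : (Fin n → F) ⧸ C} (hs : s ≠ 0) :
    Nat.card {p : Fin n × Fˣ // (p.2 : F) • C.mkQ (Pi.single p.1 (1 : F)) = s} =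
      Nat.card {j : Fin n // ∃ γ : Fˣ, (γ : F) • C.mkQ (Pi.single j (1 : F)) = s} := by
  refine Nat.card_congr (Equiv.ofBijective (fun p => ⟨p.1.1, p.1.2, p.2⟩) ⟨?_, ?_⟩)
  · rintro ⟨⟨i, γ⟩, hp⟩ ⟨⟨i', γ'⟩, hp'⟩ heq
    simp only [Subtype.mk.injEq] at heq
    subst heq
    have hq : C.mkQ (Pi.single i (1 : F)) ≠ 0 := by
      intro h0
      rw [h0, smul_zero] at hp
      exact hs hp.symm
    have : (γ : F) = (γ' : F) := by
      have h2 : ((γ : F) - (γ' : F)) • C.mkQ (Pi.single i (1 : F)) = 0 := by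
        rw [sub_smul, hp, hp', sub_self]
      rcases smul_eq_zero.mp h2 with h | h
      · exact sub_eq_zero.mp h
      · exact absurd h hq
    have : γ = γ' := Units.ext this
    subst this; rfl
  · rintro ⟨j, γ, hγ⟩
    exact ⟨⟨⟨j, γ⟩, hγ⟩, rfl⟩

lemma CR11.card_nbrs_const (C : Submodule F (Fin n → F)) {b c : ℕ → ℕ}
    (hbc : HasIntersectionNumbers (C : Set (Fin n → F)) b c)
    (hρ : coveringRadius (C : Set (Fin n → F)) = 1)
    {x : Fin n → F} (hx : x ∉ C) :
    Nat.card {y : Fin n → F // hammingDist x y = 1 ∧ y ∈ (C : Set (Fin n → F))} = c 1 := by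
  have h1 := (hbc 1 x (CR11.distToCode_eq_one C hρ hx)).2
  refine Eq.trans ?_ h1
  refine Nat.card_congr (Equiv.subtypeEquivRight fun y => ?_)
  simp only [Set.mem_setOf_eq]
  constructor
  · rintro ⟨h1', h2'⟩
    exact ⟨h1', by rw [(CR11.distToCode_eq_zero_iff C y).mpr h2']⟩
  · rintro ⟨h1', h2'⟩
    exact ⟨h1', (CR11.distToCode_eq_zero_iff C y).mp (by omega)⟩

lemma CR11.fiber_card_eq (C : Submodule F (Fin n → F)) {b c : ℕ → ℕ}
    (hbc : HasIntersectionNumbers (C : Set (Fin n → F)) b c)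
    (hρ : coveringRadius (C : Set (Fin n → F)) = 1)
    {s : (Fin n → F) ⧸ C} (hs : s ≠ 0) :
    Nat.card {j : Fin n // ∃ γ : Fˣ, (γ : F) • C.mkQ (Pi.single j (1 : F)) = s} = c 1 := by
  obtain ⟨x, hx⟩ := C.mkQ_surjective s
  subst hx
  have hxC : x ∉ C := fun hm => hs (by rw [Submodule.mkQ_apply, Submodule.Quotient.mk_eq_zero]; exact hm)
  rw [← CR11.card_pairs_eq_card_fiber C hs, CR11.card_pairs_eq_card_nbrs C x]
  exact CR11.card_nbrs_const C hbc hρ hxC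

lemma CR11.exists_perm_of_card_fiber_eq {α S : Type*} [Finite α] (g h : α → S)
    (hf : ∀ a : S, Nat.card {x // g x = a} = Nat.card {x // h x = a}) :
    ∃ τ : Equiv.Perm α, ∀ x, g (τ x) = h x := by
  classical
  haveI := Fintype.ofFinite α
  have fe : ∀ a : S, {x // h x = a} ≃ {x // g x = a} := fun a =>
    Fintype.equivOfCardEq (by
      rw [← Nat.card_eq_fintype_card, ← Nat.card_eq_fintype_card]
      exact (hf a).symm)
  refine ⟨(Equiv.sigmaFiberEquiv h).symm.trans
    ((Equiv.sigmaCongrRight fe).trans (Equiv.sigmaFiberEquiv g)), fun x => ?_⟩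
  exact (fe (h x) ⟨x, rfl⟩).2

lemma CR11.exists_linearEquiv_apply_eq {K V : Type*} [Field K] [AddCommGroup V] [Module K V]
    {s t : V} (hs : s ≠ 0) (ht : t ≠ 0) : ∃ B : V ≃ₗ[K] V, B s = t := by
  classical
  have hsl : LinearIndepOn K id ({s} : Set V) :=
    (linearIndepOn_singleton_iff K).mpr hs
  have htl : LinearIndepOn K id ({t} : Set V) :=
    (linearIndepOn_singleton_iff K).mpr ht
  let b := Module.Basis.extend hsl
  let b' := Module.Basis.extend htl
  have hsmem : s ∈ hsl.extend (Set.subset_univ {s}) :=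
    hsl.subset_extend _ (Set.mem_singleton s)
  have htmem : t ∈ htl.extend (Set.subset_univ {t}) :=
    htl.subset_extend _ (Set.mem_singleton t)
  let e0 := b.indexEquiv b'
  let e := e0.trans (Equiv.swap (e0 ⟨s, hsmem⟩) ⟨t, htmem⟩)
  refine ⟨b.equiv b' e, ?_⟩
  have h1 : (b ⟨s, hsmem⟩ : V) = s := by rw [Module.Basis.coe_extend]
  have h2 : (b' ⟨t, htmem⟩ : V) = t := by rw [Module.Basis.coe_extend]
  calc (b.equiv b' e) s = (b.equiv b' e) (b ⟨s, hsmem⟩) := by rw [h1]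
    _ = b' (e ⟨s, hsmem⟩) := b.equiv_apply _ b' e
    _ = b' ⟨t, htmem⟩ := by
        show b' ((e0.trans (Equiv.swap (e0 ⟨s, hsmem⟩) ⟨t, htmem⟩)) ⟨s, hsmem⟩) = _
        rw [Equiv.trans_apply, Equiv.swap_apply_left]
    _ = t := h2

lemma CR11.monomial_id {ι : Type*} : IsMonomialMap (F := F) (id : (ι → F) → (ι → F)) :=
  ⟨Equiv.refl ι, fun _ => 1, fun x i => by simp⟩

lemma CR11.monomial_sub {ι : Type*} {φ : (ι → F) → (ι → F)} (h : IsMonomialMap φ)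
    (a b : ι → F) : φ a - φ b = φ (a - b) := by
  obtain ⟨π, s, hφ⟩ := h
  funext i
  simp [hφ, mul_sub]

lemma CR11.monomial_inverse {ι : Type*} {ψ : (ι → F) → (ι → F)} (hm : IsMonomialMap ψ) :
    ∃ ψ' : (ι → F) → (ι → F),
      IsMonomialMap ψ' ∧ (∀ x, ψ' (ψ x) = x) ∧ (∀ x, ψ (ψ' x) = x) := by
  obtain ⟨π, s, hψ⟩ := hm
  refine ⟨fun x i => (((s (π.symm i))⁻¹ : Fˣ) : F) * x (π.symm i),
    ⟨π.symm, fun i => (s (π.symm i))⁻¹, fun x i => rfl⟩, ?_, ?_⟩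
  · intro x; funext i
    show (((s (π.symm i))⁻¹ : Fˣ) : F) * ψ x (π.symm i) = x i
    rw [hψ, ← mul_assoc, Units.inv_mul, one_mul, π.apply_symm_apply]
  · intro x; funext i
    rw [hψ]
    show (s i : F) * ((((s (π.symm (π i)))⁻¹ : Fˣ) : F) * x (π.symm (π i))) = x i
    rw [π.symm_apply_apply, ← mul_assoc, Units.mul_inv, one_mul]

lemma CR11.cosetOrbit_subset (C : Submodule F (Fin n → F)) {u v : Fin n → F}
    (ψ : (Fin n → F) → (Fin n → F)) (hm : IsMonomialMap ψ)
    (hC : ψ '' (C : Set (Fin n → F)) = (C : Set (Fin n → F))) (hin : ψ u - v ∈ C) :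
    cosetOrbit C v ⊆ cosetOrbit C u := by
  rintro w ⟨φ, hφm, hφC, hφw⟩
  refine ⟨φ ∘ ψ, ?_, ?_, ?_⟩
  · obtain ⟨π, s, hφ⟩ := hφm
    obtain ⟨π', s', hψ'⟩ := hm
    exact ⟨π.trans π', fun i => s i * s' (π i), fun x i => by
      simp [hφ, hψ', Units.val_mul, mul_assoc, Equiv.trans_apply]⟩
  · rw [Set.image_comp, hC, hφC]
  · have h1 : φ (ψ u) - φ v ∈ C := by
      have h2 := Set.mem_image_of_mem φ (show ψ u - v ∈ (C : Set (Fin n → F)) from hin)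
      rw [hφC] at h2
      rw [CR11.monomial_sub hφm]
      exact h2
    have h3 := C.add_mem h1 hφw
    rw [sub_add_sub_cancel] at h3
    exact h3

lemma CR11.cosetOrbit_eq (C : Submodule F (Fin n → F)) {u v : Fin n → F}
    (h : ∃ ψ : (Fin n → F) → (Fin n → F), IsMonomialMap ψ ∧
      ψ '' (C : Set (Fin n → F)) = (C : Set (Fin n → F)) ∧ ψ u - v ∈ C) :
    cosetOrbit C u = cosetOrbit C v := by
  obtain ⟨ψ, hm, hC, hin⟩ := h
  obtain ⟨ψ', hm', hl, hr⟩ := CR11.monomial_inverse hm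
  have hC' : ψ' '' (C : Set (Fin n → F)) = (C : Set (Fin n → F)) := by
    calc ψ' '' (C : Set (Fin n → F)) = ψ' '' (ψ '' (C : Set (Fin n → F))) := by rw [hC]
      _ = (ψ' ∘ ψ) '' (C : Set (Fin n → F)) := (Set.image_comp _ _ _).symm
      _ = (C : Set (Fin n → F)) := by rw [show ψ' ∘ ψ = id from funext hl, Set.image_id]
  have hin' : ψ' v - u ∈ C := by
    have h1 : v - ψ u ∈ C := by
      have := C.neg_mem hin
      rwa [neg_sub] at this
    have h2 : ψ' (v - ψ u) ∈ C := by
      have := Set.mem_image_of_mem ψ' (show v - ψ u ∈ (C : Set (Fin n → F)) from h1)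
      rwa [hC'] at this
    have h3 : ψ' v - ψ' (ψ u) = ψ' (v - ψ u) := CR11.monomial_sub hm' v (ψ u)
    rw [hl u] at h3
    rw [h3]
    exact h2
  apply Set.Subset.antisymm
  · exact CR11.cosetOrbit_subset C ψ' hm' hC' hin'
  · exact CR11.cosetOrbit_subset C ψ hm hC hin

lemma CR11.exists_monomial_auto (C : Submodule F (Fin n → F))
    (hcr : IsCompletelyRegular (C : Set (Fin n → F)))
    (hρ : coveringRadius (C : Set (Fin n → F)) = 1)
    {u v : Fin n → F} (hu : u ∉ C) (hv : v ∉ C) :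
    ∃ φ : (Fin n → F) → (Fin n → F), IsMonomialMap φ ∧
      φ '' (C : Set (Fin n → F)) = (C : Set (Fin n → F)) ∧ φ u - v ∈ C := by
  classical
  obtain ⟨b, c, hbc⟩ := hcr
  set q : Fin n → ((Fin n → F) ⧸ C) := fun j => C.mkQ (Pi.single j (1 : F)) with hqdef
  have hfib : ∀ {s : (Fin n → F) ⧸ C}, s ≠ 0 →
      Nat.card {j : Fin n // ∃ γ : Fˣ, (γ : F) • q j = s} = c 1 := fun hs =>
    CR11.fiber_card_eq C hbc hρ hs
  have hmkne : ∀ {x : Fin n → F}, x ∉ C → C.mkQ x ≠ 0 := fun hx h0 =>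
    hx (by rwa [Submodule.mkQ_apply, Submodule.Quotient.mk_eq_zero] at h0)
  obtain ⟨B, hB⟩ := CR11.exists_linearEquiv_apply_eq (K := F) (hmkne hu) (hmkne hv)
  -- the projective equivalence relation on the quotient
  let rel : ((Fin n → F) ⧸ C) → ((Fin n → F) ⧸ C) → Prop :=
    fun a b' => ∃ γ : Fˣ, (γ : F) • a = b'
  have hrefl : ∀ a, rel a a := fun a => ⟨1, by simp⟩
  have hsymm : ∀ {a b'}, rel a b' → rel b' a := by
    rintro a b' ⟨γ, rfl⟩
    exact ⟨γ⁻¹, by rw [smul_smul, ← Units.val_mul, inv_mul_cancel, Units.val_one, one_smul]⟩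
  have htrans : ∀ {a b' c'}, rel a b' → rel b' c' → rel a c' := by
    rintro a b' c' ⟨γ, rfl⟩ ⟨δ, rfl⟩
    exact ⟨δ * γ, by rw [Units.val_mul, mul_smul]⟩
  let sQ : Setoid ((Fin n → F) ⧸ C) := ⟨rel, ⟨hrefl, fun h => hsymm h, fun h h' => htrans h h'⟩⟩
  let g : Fin n → Quotient sQ := fun j => Quotient.mk sQ (q j)
  let h : Fin n → Quotient sQ := fun j => Quotient.mk sQ (B (q j))
  have hkeyz : ∀ w : (Fin n → F) ⧸ C, (Quotient.mk sQ w = Quotient.mk sQ 0) ↔ w = 0 := by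
    intro w
    constructor
    · intro hh
      obtain ⟨γ, hγ⟩ := Quotient.exact hh
      rcases smul_eq_zero.mp hγ with h' | h'
      · exact absurd h' (Units.ne_zero γ)
      · exact h'
    · rintro rfl; rfl
  have hfibeq : ∀ a : Quotient sQ, Nat.card {x // g x = a} = Nat.card {x // h x = a} := by
    intro a
    refine Quotient.ind (motive := fun a => Nat.card {x // g x = a} = Nat.card {x // h x = a}) (fun z => ?_) a
    show Nat.card {x // g x = Quotient.mk sQ z} = Nat.card {x // h x = Quotient.mk sQ z}
    by_cases hz : z = 0
    · subst hz
      refine Nat.card_congr (Equiv.subtypeEquivRight fun j => ?_)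
      show Quotient.mk sQ (q j) = Quotient.mk sQ 0 ↔ Quotient.mk sQ (B (q j)) = Quotient.mk sQ 0
      rw [hkeyz, hkeyz, LinearEquiv.map_eq_zero_iff]
    · have h1 : Nat.card {x // g x = Quotient.mk sQ z} =
          Nat.card {j : Fin n // ∃ γ : Fˣ, (γ : F) • q j = z} :=
        Nat.card_congr (Equiv.subtypeEquivRight fun j =>
          ⟨fun hh => Quotient.exact hh, fun hh => Quotient.sound hh⟩)
      have hBz : B.symm z ≠ 0 := fun h' => hz (by
        rw [← B.apply_symm_apply z, h', map_zero])
      have h2 : Nat.card {x // h x = Quotient.mk sQ z} =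
          Nat.card {j : Fin n // ∃ γ : Fˣ, (γ : F) • q j = B.symm z} := by
        refine Nat.card_congr (Equiv.subtypeEquivRight fun j => ?_)
        constructor
        · intro hh
          obtain ⟨γ, hγ⟩ := Quotient.exact hh
          refine ⟨γ, ?_⟩
          have := congrArg B.symm hγ
          rwa [map_smul, B.symm_apply_apply] at this
        · rintro ⟨γ, hγ⟩
          refine Quotient.sound ⟨γ, ?_⟩
          have := congrArg B hγ
          rwa [map_smul, B.apply_symm_apply] at this
      rw [h1, h2, hfib hz, hfib hBz]
  obtain ⟨τ, hτ⟩ := CR11.exists_perm_of_card_fiber_eq g h hfibeq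
  have hτ' : ∀ j, ∃ γ : Fˣ, (γ : F) • q (τ j) = B (q j) := fun j => Quotient.exact (hτ j)
  choose γfun hγ using hτ'
  let sc : Fin n → Fˣ := fun i => γfun (τ.symm i)
  let π : Equiv.Perm (Fin n) := τ.symm
  let φ : (Fin n → F) → (Fin n → F) := fun x i => (sc i : F) * x (π i)
  let φL : (Fin n → F) →ₗ[F] (Fin n → F) :=
    { toFun := φ
      map_add' := fun a b' => by funext i; simp [φ, mul_add]
      map_smul' := fun r a => by funext i; simp [φ]; ring }
  have hkey : ∀ x : Fin n → F, C.mkQ (φ x) = B (C.mkQ x) := by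
    have hcomp : C.mkQ.comp φL =
        (B : ((Fin n → F) ⧸ C) →ₗ[F] ((Fin n → F) ⧸ C)).comp C.mkQ := by
      apply (Pi.basisFun F (Fin n)).ext
      intro j
      rw [Pi.basisFun_apply]
      simp only [LinearMap.comp_apply]
      have hφsingle : φL (Pi.single j (1 : F)) = Pi.single (τ j) ((sc (τ j) : F)) := by
        funext i
        show (sc i : F) * (Pi.single j (1 : F) : Fin n → F) (π i) = _
        by_cases hi : i = τ j
        · subst hi
          rw [show π (τ j) = j from τ.symm_apply_apply j]
          rw [Pi.single_eq_same, Pi.single_eq_same, mul_one]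
        · have hne : π i ≠ j := fun hc => hi (by rw [← hc, τ.apply_symm_apply])
          rw [Pi.single_eq_of_ne (M := fun _ => F) hne, Pi.single_eq_of_ne hi, mul_zero]
      rw [hφsingle, CR11.mkQ_single]
      have hsc : sc (τ j) = γfun j := by simp [sc, τ.symm_apply_apply]
      rw [hsc]
      exact hγ j
    intro x
    have := LinearMap.congr_fun hcomp x
    exact this
  have hmemiff : ∀ x : Fin n → F, φ x ∈ C ↔ x ∈ C := by
    intro x
    have h0 : C.mkQ (φ x) = 0 ↔ C.mkQ x = 0 := by
      rw [hkey]; exact LinearEquiv.map_eq_zero_iff B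
    rw [Submodule.mkQ_apply, Submodule.mkQ_apply, Submodule.Quotient.mk_eq_zero,
      Submodule.Quotient.mk_eq_zero] at h0
    exact h0
  obtain ⟨ψ, hmψ, hlψ, hrψ⟩ := CR11.monomial_inverse (ψ := φ) ⟨π, sc, fun x i => rfl⟩
  have himg : φ '' (C : Set (Fin n → F)) = (C : Set (Fin n → F)) := by
    apply Set.Subset.antisymm
    · rintro _ ⟨x, hx, rfl⟩
      exact (hmemiff x).mpr hx
    · intro z hz
      exact ⟨ψ z, (hmemiff (ψ z)).mp (by rw [hrψ z]; exact hz), hrψ z⟩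
  refine ⟨φ, ⟨π, sc, fun x i => rfl⟩, himg, ?_⟩
  have hfin : C.mkQ (φ u - v) = 0 := by
    rw [map_sub, hkey, hB, sub_self]
  rwa [Submodule.mkQ_apply, Submodule.Quotient.mk_eq_zero] at hfin

end CR11Aux

/-- every nontrivial linear completely regular code with covering radius 1
is completely transitive. -/
theorem completely_regular_rho_one_is_completely_transitive
    {F : Type*} [Field F] [Fintype F] [DecidableEq F] {n k d : ℕ}
    (C : Submodule F (Fin n → F))
    (hk : Module.finrank F C = k)
    (hd : minDist (C : Set (Fin n → F)) = d)
    (hk2 : 2 ≤ k) (hkn : k + 2 ≤ n)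
    (hcr : IsCompletelyRegular (C : Set (Fin n → F)))
    (hρ : coveringRadius (C : Set (Fin n → F)) = 1) :
    numCosetOrbits C = 2 := by
  classical
  have hCtop : C ≠ ⊤ := by
    intro hC
    rw [hC, finrank_top, Module.finrank_fin_fun] at hk
    omega
  obtain ⟨v0, hv0⟩ : ∃ v0 : Fin n → F, v0 ∉ C := by
    by_contra hall
    push_neg at hall
    exact hCtop (Submodule.eq_top_iff'.mpr hall)
  have horbits : Set.range (cosetOrbit C) = {cosetOrbit C 0, cosetOrbit C v0} := by
    apply Set.Subset.antisymm
    · rintro O ⟨v, rfl⟩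
      by_cases hvC : v ∈ C
      · exact Or.inl (CR11.cosetOrbit_eq C ⟨id, CR11.monomial_id, by rw [Set.image_id],
          by simpa using hvC⟩)
      · exact Or.inr (Set.mem_singleton_iff.mpr
          (CR11.cosetOrbit_eq C (CR11.exists_monomial_auto C hcr hρ hvC hv0)))
    · rintro O hO
      rcases hO with rfl | rfl
      · exact ⟨0, rfl⟩
      · exact ⟨v0, rfl⟩
  have hne : cosetOrbit C 0 ≠ cosetOrbit C v0 := by
    intro heq
    have hv0in : v0 ∈ cosetOrbit C v0 :=
      ⟨id, CR11.monomial_id, by rw [Set.image_id], by simp⟩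
    rw [← heq] at hv0in
    obtain ⟨φ, hφm, hφC, hφw⟩ := hv0in
    have hφ0 : φ 0 = 0 := by
      obtain ⟨π, s, hφ⟩ := hφm
      funext i
      simp [hφ]
    rw [hφ0, zero_sub] at hφw
    exact hv0 (by simpa using C.neg_mem hφw)
  rw [numCosetOrbits, horbits, Nat.card_coe_set_eq, Set.ncard_pair hne]
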